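/- arXiv:math/0412049 — 2 statements merged into one kernel-verified Lean document; each statement's English description precedes it below -/
import Mathlib

section
/- Let f₀, g₀, f₁, g₁ be nonzero homogeneous polynomials of degree 1 in ℂ[s,t] such that neither f₀ nor g₀ is a scalar multiple of f₁ or of g₁. Then for every nonzero homogeneous polynomial ℓ of degree 1 in ℂ[s,t], the cube ℓ³ does not divide f₀²g₀² − f₁²g₁². (This is the paper's argument, via the factorization f₀²g₀²−f₁²g₁² = (f₀g₀+f₁g₁)(f₀g₀−f₁g₁), that no degree-4 base change ℙ¹ → ℙ¹ can have ramification index (2,2) over two points and (3,1) over a third point.) -/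
open MvPolynomial

lemma topComp_ne_zero {σ : Type*} {R : Type*} [CommSemiring R] (p : MvPolynomial σ R)
    (hp : p ≠ 0) : homogeneousComponent p.totalDegree p ≠ 0 := by
  have hsupp : p.support.Nonempty := by
    rw [Finset.nonempty_iff_ne_empty]
    intro h
    exact hp (MvPolynomial.support_eq_empty.mp h)
  obtain ⟨d, hd, hsup⟩ := Finset.exists_mem_eq_sup p.support hsupp
    (fun s => s.sum fun _ e => e)
  have hdeg : d.degree = p.totalDegree := by
    rw [totalDegree, hsup]; rfl
  intro h
  have hc := coeff_homogeneousComponent p.totalDegree p d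
  rw [h, coeff_zero, if_pos hdeg] at hc
  exact (MvPolynomial.mem_support_iff.mp hd) hc.symm

lemma totalDegree_mul_eq' {σ : Type*} {R : Type*} [CommRing R] [IsDomain R]
    {p q : MvPolynomial σ R} (hp : p ≠ 0) (hq : q ≠ 0) :
    (p * q).totalDegree = p.totalDegree + q.totalDegree := by
  refine le_antisymm (totalDegree_mul p q) ?_
  set m := p.totalDegree with hm
  set n := q.totalDegree with hn
  have step : ∀ i ∈ Finset.range (m + 1), ∀ j ∈ Finset.range (n + 1),
      homogeneousComponent (m + n) (homogeneousComponent i p * homogeneousComponent j q)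
        = if i = m then if j = n then
            homogeneousComponent m p * homogeneousComponent n q else 0 else 0 := by
    intro i hi j hj
    rw [homogeneousComponent_of_mem ((mem_homogeneousSubmodule _ _).2
      ((homogeneousComponent_isHomogeneous i p).mul (homogeneousComponent_isHomogeneous j q)))]
    simp only [Finset.mem_range] at hi hj
    by_cases h : i = m ∧ j = n
    · obtain ⟨rfl, rfl⟩ := h
      simp
    · have hne2 : ¬ (m + n = i + j) := by omega
      rw [if_neg hne2]
      by_cases hi' : i = m
      · subst hi'
        have hj' : ¬ j = n := fun hh => h ⟨rfl, hh⟩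
        rw [if_pos rfl, if_neg hj']
      · rw [if_neg hi']
  have key : homogeneousComponent (m + n) (p * q) =
      homogeneousComponent m p * homogeneousComponent n q := by
    conv_lhs => rw [← sum_homogeneousComponent p, ← sum_homogeneousComponent q, ← hm, ← hn,
      Finset.sum_mul_sum]
    rw [map_sum]
    simp only [map_sum]
    rw [Finset.sum_congr rfl fun i hi => Finset.sum_congr rfl fun j hj => step i hi j hj]
    simp [Finset.sum_ite_eq', Finset.mem_range]
  have hne : homogeneousComponent (m + n) (p * q) ≠ 0 := by
    rw [key]
    exact mul_ne_zero (topComp_ne_zero p hp) (topComp_ne_zero q hq)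
  by_contra hlt
  push_neg at hlt
  exact hne (homogeneousComponent_eq_zero _ _ hlt)

lemma eq_C_of_totalDegree_zero' {σ : Type*} {R : Type*} [CommSemiring R] {p : MvPolynomial σ R}
    (h : p.totalDegree = 0) : p = C (coeff 0 p) := by
  have hh := isHomogeneous_of_totalDegree_zero _ h
  rw [← homogeneousComponent_zero,
    homogeneousComponent_of_mem ((mem_homogeneousSubmodule _ _).2 hh), if_pos rfl]

lemma lin_dvd' {ℓ f : MvPolynomial (Fin 2) ℂ} (hℓ : ℓ ≠ 0) (hf : f ≠ 0)
    (hℓh : ℓ.IsHomogeneous 1) (hfh : f.IsHomogeneous 1) (hdvd : ℓ ∣ f) :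
    ∃ c : ℂ, c ≠ 0 ∧ f = c • ℓ := by
  obtain ⟨q, rfl⟩ := hdvd
  have hq : q ≠ 0 := right_ne_zero_of_mul hf
  have hdeg : (ℓ * q).totalDegree = 1 := hfh.totalDegree hf
  rw [totalDegree_mul_eq' hℓ hq, hℓh.totalDegree hℓ] at hdeg
  have hq0 : q.totalDegree = 0 := by omega
  have hqC : q = C (coeff 0 q) := eq_C_of_totalDegree_zero' hq0
  refine ⟨coeff 0 q, ?_, ?_⟩
  · intro h
    apply hq
    rw [hqC, h, map_zero]
  · rw [smul_eq_C_mul, ← hqC]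
    exact mul_comm ℓ q

lemma lin_prime' {ℓ : MvPolynomial (Fin 2) ℂ} (hℓ : ℓ ≠ 0) (hℓh : ℓ.IsHomogeneous 1) :
    Prime ℓ := by
  rw [← UniqueFactorizationMonoid.irreducible_iff_prime]
  have h1 : ℓ.totalDegree = 1 := hℓh.totalDegree hℓ
  constructor
  · intro hu
    obtain ⟨v, hv⟩ := hu.exists_right_inv
    have hv0 : v ≠ 0 := by
      rintro rfl
      rw [mul_zero] at hv
      exact zero_ne_one hv
    have := totalDegree_mul_eq' hℓ hv0
    rw [hv, totalDegree_one, h1] at this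
    omega
  · intro a b hab
    have ha : a ≠ 0 := by rintro rfl; rw [zero_mul] at hab; exact hℓ hab
    have hb : b ≠ 0 := by rintro rfl; rw [mul_zero] at hab; exact hℓ hab
    have hd := totalDegree_mul_eq' ha hb
    rw [← hab, h1] at hd
    have : a.totalDegree = 0 ∨ b.totalDegree = 0 := by omega
    rcases this with h | h
    · left
      have haC : a = C (coeff 0 a) := eq_C_of_totalDegree_zero' h
      have hc : coeff 0 a ≠ 0 := by
        intro hcc; apply ha; rw [haC, hcc, map_zero]
      rw [haC]
      exact (isUnit_iff_ne_zero.mpr hc).map (C : ℂ →+* MvPolynomial (Fin 2) ℂ)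
    · right
      have hbC : b = C (coeff 0 b) := eq_C_of_totalDegree_zero' h
      have hc : coeff 0 b ≠ 0 := by
        intro hcc; apply hb; rw [hbC, hcc, map_zero]
      rw [hbC]
      exact (isUnit_iff_ne_zero.mpr hc).map (C : ℂ →+* MvPolynomial (Fin 2) ℂ)

theorem stmt_17 (f₀ g₀ f₁ g₁ : MvPolynomial (Fin 2) ℂ)
    (hf₀ : f₀ ≠ 0) (hg₀ : g₀ ≠ 0) (hf₁ : f₁ ≠ 0) (hg₁ : g₁ ≠ 0)
    (hf₀h : f₀.IsHomogeneous 1) (hg₀h : g₀.IsHomogeneous 1)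
    (hf₁h : f₁.IsHomogeneous 1) (hg₁h : g₁.IsHomogeneous 1)
    (h₀₁ : ∀ c : ℂ, c ≠ 0 → f₀ ≠ c • f₁) (h₀₂ : ∀ c : ℂ, c ≠ 0 → f₀ ≠ c • g₁)
    (h₀₃ : ∀ c : ℂ, c ≠ 0 → g₀ ≠ c • f₁) (h₀₄ : ∀ c : ℂ, c ≠ 0 → g₀ ≠ c • g₁) :
    ∀ ℓ : MvPolynomial (Fin 2) ℂ, ℓ ≠ 0 → ℓ.IsHomogeneous 1 →
      ¬ (ℓ ^ 3 ∣ f₀ ^ 2 * g₀ ^ 2 - f₁ ^ 2 * g₁ ^ 2) := by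
  have lin_smul : ∀ u v : MvPolynomial (Fin 2) ℂ, u ≠ 0 → v ≠ 0 → u.IsHomogeneous 1 →
      v.IsHomogeneous 1 → (∀ c : ℂ, c ≠ 0 → u ≠ c • v) → ¬ u ∣ v := by
    intro u v hu hv huh hvh hne hdvd
    obtain ⟨c, hc, hvc⟩ := lin_dvd' hu hv huh hvh hdvd
    refine hne c⁻¹ (inv_ne_zero hc) ?_
    rw [hvc, smul_smul, inv_mul_cancel₀ hc, one_smul]
  have nd₁ : ¬ f₀ ∣ f₁ := lin_smul f₀ f₁ hf₀ hf₁ hf₀h hf₁h h₀₁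
  have nd₂ : ¬ f₀ ∣ g₁ := lin_smul f₀ g₁ hf₀ hg₁ hf₀h hg₁h h₀₂
  intro ℓ hℓ hℓh hdvd
  have hpf₀ := lin_prime' hf₀ hf₀h
  have hpl := lin_prime' hℓ hℓh
  have hfact : f₀ ^ 2 * g₀ ^ 2 - f₁ ^ 2 * g₁ ^ 2 =
      (f₀ * g₀ + f₁ * g₁) * (f₀ * g₀ - f₁ * g₁) := by ring
  rw [hfact] at hdvd
  have hP : f₀ * g₀ + f₁ * g₁ ≠ 0 := by
    intro h0
    have hdv : f₀ ∣ f₁ * g₁ := ⟨-g₀, by linear_combination h0⟩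
    rcases hpf₀.2.2 _ _ hdv with h | h
    · exact nd₁ h
    · exact nd₂ h
  have hQ : f₀ * g₀ - f₁ * g₁ ≠ 0 := by
    intro h0
    have hdv : f₀ ∣ f₁ * g₁ := ⟨g₀, by linear_combination -h0⟩
    rcases hpf₀.2.2 _ _ hdv with h | h
    · exact nd₁ h
    · exact nd₂ h
  have hPhom : (f₀ * g₀ + f₁ * g₁).IsHomogeneous 2 := (hf₀h.mul hg₀h).add (hf₁h.mul hg₁h)
  have hQhom : (f₀ * g₀ - f₁ * g₁).IsHomogeneous 2 := (hf₀h.mul hg₀h).sub (hf₁h.mul hg₁h)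
  have hdegℓ3 : (ℓ ^ 3).totalDegree = 3 := (hℓh.pow 3).totalDegree (pow_ne_zero 3 hℓ)
  have hnd3 : ∀ A : MvPolynomial (Fin 2) ℂ, A ≠ 0 → A.IsHomogeneous 2 → ¬ ℓ ^ 3 ∣ A := by
    intro A hA hAh hd
    obtain ⟨r, hr⟩ := hd
    have hr0 : r ≠ 0 := by
      rintro rfl
      rw [mul_zero] at hr
      exact hA hr
    have hdA := hAh.totalDegree hA
    rw [hr, totalDegree_mul_eq' (pow_ne_zero 3 hℓ) hr0, hdegℓ3] at hdA
    omega
  have hℓP : ℓ ∣ f₀ * g₀ + f₁ * g₁ := by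
    by_contra h
    exact hnd3 _ hQ hQhom (hpl.pow_dvd_of_dvd_mul_left 3 h hdvd)
  have hℓQ : ℓ ∣ f₀ * g₀ - f₁ * g₁ := by
    by_contra h
    exact hnd3 _ hP hPhom (hpl.pow_dvd_of_dvd_mul_right 3 h hdvd)
  have h2 : ¬ ℓ ∣ (2 : MvPolynomial (Fin 2) ℂ) := by
    intro hd
    obtain ⟨r, hr⟩ := hd
    have h20 : (2 : MvPolynomial (Fin 2) ℂ) ≠ 0 := two_ne_zero
    have hr0 : r ≠ 0 := by
      rintro rfl
      rw [mul_zero] at hr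
      exact h20 hr
    have hd2 : (2 : MvPolynomial (Fin 2) ℂ).totalDegree = 0 := by
      rw [← map_ofNat (C : ℂ →+* MvPolynomial (Fin 2) ℂ) 2]
      exact totalDegree_C _
    rw [hr, totalDegree_mul_eq' hℓ hr0, hℓh.totalDegree hℓ] at hd2
    omega
  have hd0 : ℓ ∣ f₀ * g₀ := by
    have hsum : ℓ ∣ 2 * (f₀ * g₀) := by
      have := dvd_add hℓP hℓQ
      rwa [show (f₀ * g₀ + f₁ * g₁) + (f₀ * g₀ - f₁ * g₁) = 2 * (f₀ * g₀) by ring] at this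
    exact (hpl.2.2 _ _ hsum).resolve_left h2
  have hd1 : ℓ ∣ f₁ * g₁ := by
    have hsum : ℓ ∣ 2 * (f₁ * g₁) := by
      have := dvd_sub hℓP hℓQ
      rwa [show (f₀ * g₀ + f₁ * g₁) - (f₀ * g₀ - f₁ * g₁) = 2 * (f₁ * g₁) by ring] at this
    exact (hpl.2.2 _ _ hsum).resolve_left h2
  have final : ∀ u v : MvPolynomial (Fin 2) ℂ, u ≠ 0 → v ≠ 0 → u.IsHomogeneous 1 →
      v.IsHomogeneous 1 → (∀ c : ℂ, c ≠ 0 → u ≠ c • v) → ℓ ∣ u → ℓ ∣ v → False := by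
    intro u v hu hv huh hvh hne hdu hdv
    obtain ⟨a, ha, hua⟩ := lin_dvd' hℓ hu hℓh huh hdu
    obtain ⟨b, hb, hvb⟩ := lin_dvd' hℓ hv hℓh hvh hdv
    refine hne (a * b⁻¹) (mul_ne_zero ha (inv_ne_zero hb)) ?_
    rw [hua, hvb, smul_smul, mul_assoc, inv_mul_cancel₀ hb, mul_one]
  rcases hpl.2.2 _ _ hd0 with h | h <;> rcases hpl.2.2 _ _ hd1 with h' | h'
  · exact final f₀ f₁ hf₀ hf₁ hf₀h hf₁h h₀₁ h h'
  · exact final f₀ g₁ hf₀ hg₁ hf₀h hg₁h h₀₂ h h'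
  · exact final g₀ f₁ hg₀ hf₁ hg₀h hf₁h h₀₃ h h'
  · exact final g₀ g₁ hg₀ hg₁ hg₀h hg₁h h₀₄ h h'
end

section
/- Let f₀, g₀, f₁, g₁ be nonzero homogeneous polynomials of degree 1 in ℂ[s,t] such that neither f₀ nor g₀ is a scalar multiple of f₁ or of g₁. Then for every nonzero homogeneous polynomial ℓ of degree 1 in ℂ[s,t], the cube ℓ³ does not divide f₀³g₀³ − f₁³g₁³. (This is the paper's argument, via the factorization f₀³g₀³−f₁³g₁³ = (f₀g₀−f₁g₁)(f₀g₀−ϱf₁g₁)(f₀g₀−ϱ²f₁g₁) with ϱ a primitive third root of unity, that no degree-6 base change ℙ¹ → ℙ¹ can have ramification index (3,3) over two points and (3,1,1,1) over a third point.) -/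
open MvPolynomial Finset

section aux

variable {σ R : Type*} [CommRing R] [IsDomain R]

lemma my_hC_top_ne_zero {p : MvPolynomial σ R} (hp : p ≠ 0) :
    homogeneousComponent p.totalDegree p ≠ 0 := by
  obtain ⟨d, hd, hdeg⟩ := Finset.exists_mem_eq_sup p.support
    (support_nonempty.mpr hp) (fun s => s.sum fun _ e => e)
  intro h
  have hdd : d.degree = p.totalDegree := by
    rw [totalDegree, hdeg]; rfl
  have : coeff d (homogeneousComponent p.totalDegree p) = coeff d p := by
    rw [coeff_homogeneousComponent, if_pos hdd]
  rw [h] at this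
  exact (mem_support_iff.mp hd) this.symm

lemma my_td_mul {p q : MvPolynomial σ R} (hp : p ≠ 0) (hq : q ≠ 0) :
    (p * q).totalDegree = p.totalDegree + q.totalDegree := by
  refine le_antisymm (totalDegree_mul p q) ?_
  set m := p.totalDegree with hm
  set n := q.totalDegree with hn
  set P := homogeneousComponent m p with hP
  set Q := homogeneousComponent n q with hQ
  have hPp : p = (∑ i ∈ range m, homogeneousComponent i p) + P := by
    rw [hP, hm, ← Finset.sum_range_succ]
    exact (sum_homogeneousComponent p).symm
  have hQq : q = (∑ i ∈ range n, homogeneousComponent i q) + Q := by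
    rw [hQ, hn, ← Finset.sum_range_succ]
    exact (sum_homogeneousComponent q).symm
  set P' := (∑ i ∈ range m, homogeneousComponent i p) with hP'
  set Q' := (∑ i ∈ range n, homogeneousComponent i q) with hQ'
  have hPne : P ≠ 0 := my_hC_top_ne_zero hp
  have hQne : Q ≠ 0 := my_hC_top_ne_zero hq
  have hPQ : P * Q ≠ 0 := mul_ne_zero hPne hQne
  -- homogeneous component of degree m+n of p*q is P*Q
  have hsplit : p * q = P' * q + P * Q' + P * Q := by
    rw [hPp, hQq]; ring
  have hzero1 : homogeneousComponent (m + n) (P' * q) = 0 := by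
    rcases Nat.eq_zero_or_pos m with h0 | h0
    · simp [hP', h0]
    · apply homogeneousComponent_eq_zero
      have h1 : P'.totalDegree ≤ m - 1 := by
        refine le_trans (totalDegree_finset_sum _ _) (Finset.sup_le fun i hi => ?_)
        exact le_trans (homogeneousComponent_isHomogeneous i p).totalDegree_le
          (Nat.le_sub_one_of_lt (Finset.mem_range.mp hi))
      calc (P' * q).totalDegree ≤ P'.totalDegree + n := totalDegree_mul P' q
        _ ≤ (m - 1) + n := by omega
        _ < m + n := by omega
  have hzero2 : homogeneousComponent (m + n) (P * Q') = 0 := by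
    rcases Nat.eq_zero_or_pos n with h0 | h0
    · simp [hQ', h0]
    · apply homogeneousComponent_eq_zero
      have h1 : Q'.totalDegree ≤ n - 1 := by
        refine le_trans (totalDegree_finset_sum _ _) (Finset.sup_le fun i hi => ?_)
        exact le_trans (homogeneousComponent_isHomogeneous i q).totalDegree_le
          (Nat.le_sub_one_of_lt (Finset.mem_range.mp hi))
      calc (P * Q').totalDegree ≤ m + Q'.totalDegree :=
          le_trans (totalDegree_mul P Q') (by
            exact add_le_add_left (homogeneousComponent_isHomogeneous m p).totalDegree_le _)
        _ ≤ m + (n - 1) := by omega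
        _ < m + n := by omega
  have hPQhom : (P * Q).IsHomogeneous (m + n) :=
    (homogeneousComponent_isHomogeneous m p).mul (homogeneousComponent_isHomogeneous n q)
  have hkey : homogeneousComponent (m + n) (p * q) = P * Q := by
    rw [hsplit, map_add, map_add, hzero1, hzero2,
      homogeneousComponent_of_mem ((mem_homogeneousSubmodule _ _).mpr hPQhom), if_pos rfl]
    ring
  by_contra hlt
  push_neg at hlt
  exact hPQ (hkey ▸ homogeneousComponent_eq_zero _ _ hlt)

lemma my_eq_C_of_td_zero {p : MvPolynomial σ R} (h : p.totalDegree = 0) :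
    p = C (coeff 0 p) := by
  have := sum_homogeneousComponent p
  rw [h] at this
  simpa using this.symm

end aux

section field

variable {σ : Type*} {K : Type*} [Field K]

lemma my_prime_of_homog_one {ℓ : MvPolynomial σ K} (h0 : ℓ ≠ 0)
    (h : ℓ.IsHomogeneous 1) : Prime ℓ := by
  rw [← UniqueFactorizationMonoid.irreducible_iff_prime]
  have htd : ℓ.totalDegree = 1 := h.totalDegree h0
  constructor
  · intro hu
    obtain ⟨v, hv⟩ := isUnit_iff_exists_inv.mp hu
    have hvne : v ≠ 0 := by rintro rfl; simp at hv
    have := my_td_mul h0 hvne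
    rw [hv, totalDegree_one, htd] at this
    omega
  · intro a b hab
    have ha : a ≠ 0 := by rintro rfl; simp at hab; exact h0 hab
    have hb : b ≠ 0 := by rintro rfl; simp at hab; exact h0 hab
    have hsum : a.totalDegree + b.totalDegree = 1 := by
      rw [← my_td_mul ha hb, ← hab, htd]
    rcases Nat.eq_zero_or_pos a.totalDegree with h0a | h0a
    · left
      rw [my_eq_C_of_td_zero h0a]
      refine (isUnit_iff_ne_zero.mpr ?_).map (C : K →+* MvPolynomial σ K)
      intro hc
      exact ha (by rw [my_eq_C_of_td_zero h0a, hc, map_zero])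
    · right
      have h0b : b.totalDegree = 0 := by omega
      rw [my_eq_C_of_td_zero h0b]
      refine (isUnit_iff_ne_zero.mpr ?_).map (C : K →+* MvPolynomial σ K)
      intro hc
      exact hb (by rw [my_eq_C_of_td_zero h0b, hc, map_zero])

lemma my_smul_of_dvd {ℓ p : MvPolynomial σ K} (h0 : ℓ ≠ 0) (hp : p ≠ 0)
    (hℓh : ℓ.IsHomogeneous 1) (hph : p.IsHomogeneous 1) (hdvd : ℓ ∣ p) :
    ∃ c : K, c ≠ 0 ∧ p = c • ℓ := by
  obtain ⟨q, hq⟩ := hdvd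
  have hqne : q ≠ 0 := by rintro rfl; simp at hq; exact hp hq
  have htd : q.totalDegree = 0 := by
    have := my_td_mul h0 hqne
    rw [← hq, hph.totalDegree hp, hℓh.totalDegree h0] at this
    omega
  have hqC : q = C (coeff 0 q) := my_eq_C_of_td_zero htd
  refine ⟨coeff 0 q, ?_, ?_⟩
  · intro hc
    exact hqne (by rw [hqC, hc, map_zero])
  · rw [smul_eq_C_mul, ← hqC, hq]; ring

end field
theorem stmt_18 (f₀ g₀ f₁ g₁ : MvPolynomial (Fin 2) ℂ)
    (hf₀ : f₀ ≠ 0) (hg₀ : g₀ ≠ 0) (hf₁ : f₁ ≠ 0) (hg₁ : g₁ ≠ 0)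
    (hf₀h : f₀.IsHomogeneous 1) (hg₀h : g₀.IsHomogeneous 1)
    (hf₁h : f₁.IsHomogeneous 1) (hg₁h : g₁.IsHomogeneous 1)
    (h₀₁ : ∀ c : ℂ, c ≠ 0 → f₀ ≠ c • f₁) (h₀₂ : ∀ c : ℂ, c ≠ 0 → f₀ ≠ c • g₁)
    (h₀₃ : ∀ c : ℂ, c ≠ 0 → g₀ ≠ c • f₁) (h₀₄ : ∀ c : ℂ, c ≠ 0 → g₀ ≠ c • g₁) :
    ∀ ℓ : MvPolynomial (Fin 2) ℂ, ℓ ≠ 0 → ℓ.IsHomogeneous 1 →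
      ¬ (ℓ ^ 3 ∣ f₀ ^ 3 * g₀ ^ 3 - f₁ ^ 3 * g₁ ^ 3) := by
  intro ℓ hℓ0 hℓh hdvd
  -- primitive cube root of unity
  obtain ⟨ρ, hρprim⟩ : ∃ ρ : ℂ, IsPrimitiveRoot ρ 3 :=
    ⟨_, Complex.isPrimitiveRoot_exp 3 (by norm_num)⟩
  have hρ3 : ρ ^ 3 = 1 := hρprim.pow_eq_one
  have hρne1 : ρ ≠ 1 := hρprim.ne_one (by norm_num)
  have hρ0 : ρ ≠ 0 := fun h => by simp [h] at hρ3
  have hρ2ne1 : ρ ^ 2 ≠ 1 := hρprim.pow_ne_one_of_pos_of_lt (by norm_num) (by norm_num)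
  have hsum : ρ ^ 2 + ρ + 1 = 0 := by
    have h1 : (ρ - 1) * (ρ ^ 2 + ρ + 1) = 0 := by linear_combination hρ3
    rcases mul_eq_zero.mp h1 with h | h
    · exact absurd (sub_eq_zero.mp h) hρne1
    · exact h
  set a := f₀ * g₀ with ha
  set b := f₁ * g₁ with hb
  have hane : a ≠ 0 := mul_ne_zero hf₀ hg₀
  have hbne : b ≠ 0 := mul_ne_zero hf₁ hg₁
  have hah : a.IsHomogeneous 2 := hf₀h.mul hg₀h
  have hbh : b.IsHomogeneous 2 := hf₁h.mul hg₁h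
  have hP : Prime ℓ := my_prime_of_homog_one hℓ0 hℓh
  have hPf₁ : Prime f₁ := my_prime_of_homog_one hf₁ hf₁h
  have hPg₁ : Prime g₁ := my_prime_of_homog_one hg₁ hg₁h
  -- the three factors
  set F : ℂ → MvPolynomial (Fin 2) ℂ := fun c => a - C c * b with hF
  -- factorization
  have hfact : f₀ ^ 3 * g₀ ^ 3 - f₁ ^ 3 * g₁ ^ 3 = F 1 * (F ρ * F (ρ ^ 2)) := by
    simp only [hF, ha, hb]
    have hC3 : (C ρ : MvPolynomial (Fin 2) ℂ) ^ 3 = 1 := by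
      rw [← map_pow, hρ3, map_one]
    have hCsum : (C ρ : MvPolynomial (Fin 2) ℂ) ^ 2 + C ρ + 1 = 0 := by
      rw [← map_pow, ← map_add, ← map_one (C : ℂ →+* MvPolynomial (Fin 2) ℂ), ← map_add]
      rw [hsum, map_zero]
    rw [map_pow, map_one]
    linear_combination ((f₀*g₀)^2*(f₁*g₁) - (f₀*g₀)*(f₁*g₁)^2) * hCsum
      + ((f₁*g₁)^3 - (f₀*g₀)*(f₁*g₁)^2) * hC3
  -- F c ≠ 0 for c ≠ 0
  have hFne : ∀ c : ℂ, c ≠ 0 → F c ≠ 0 := by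
    intro c hc h
    simp only [hF] at h
    have hab : a = C c * b := sub_eq_zero.mp h
    have hdvdf₁ : f₁ ∣ a := ⟨C c * g₁, by rw [hab, hb]; ring⟩
    rcases hPf₁.2.2 _ _ hdvdf₁ with h' | h'
    · obtain ⟨d, hd0, hdeq⟩ := my_smul_of_dvd hf₁ hf₀ hf₁h hf₀h h'
      exact h₀₁ d hd0 hdeq
    · obtain ⟨d, hd0, hdeq⟩ := my_smul_of_dvd hf₁ hg₀ hf₁h hg₀h h'
      exact h₀₃ d hd0 hdeq
  -- ℓ divides at most one factor
  have honce : ∀ c₁ c₂ : ℂ, c₁ ≠ c₂ → ℓ ∣ F c₁ → ℓ ∣ F c₂ → False := by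
    intro c₁ c₂ hne h1 h2
    have hdb : ℓ ∣ b := by
      have : ℓ ∣ C (c₂ - c₁) * b := by
        have : C (c₂ - c₁) * b = F c₁ - F c₂ := by simp only [hF]; rw [map_sub]; ring
        rw [this]; exact dvd_sub h1 h2
      have hcne : (c₂ - c₁) ≠ 0 := sub_ne_zero.mpr (Ne.symm hne)
      have he : C (c₂ - c₁)⁻¹ * (C (c₂ - c₁) * b) = b := by
        rw [← mul_assoc, ← map_mul, inv_mul_cancel₀ hcne, map_one, one_mul]
      exact he ▸ Dvd.dvd.mul_left this _
    have hda : ℓ ∣ a := by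
      have h3 : ℓ ∣ C (c₂ - c₁) * a := by
        have : C (c₂ - c₁) * a = C c₂ * F c₁ - C c₁ * F c₂ := by
          simp only [hF]; rw [map_sub]; ring
        rw [this]; exact dvd_sub (Dvd.dvd.mul_left h1 _) (Dvd.dvd.mul_left h2 _)
      have hcne : (c₂ - c₁) ≠ 0 := sub_ne_zero.mpr (Ne.symm hne)
      have he : C (c₂ - c₁)⁻¹ * (C (c₂ - c₁) * a) = a := by
        rw [← mul_assoc, ← map_mul, inv_mul_cancel₀ hcne, map_one, one_mul]
      exact he ▸ Dvd.dvd.mul_left h3 _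
    -- ℓ divides f₀ or g₀, and f₁ or g₁
    have h01 : ℓ ∣ f₀ ∨ ℓ ∣ g₀ := hP.2.2 _ _ hda
    have h11 : ℓ ∣ f₁ ∨ ℓ ∣ g₁ := hP.2.2 _ _ hdb
    rcases h01 with h' | h' <;> rcases h11 with h'' | h''
    all_goals {
      obtain ⟨d, hd0, hdeq⟩ := my_smul_of_dvd hℓ0 (by assumption) hℓh (by assumption) h'
      obtain ⟨e, he0, heeq⟩ := my_smul_of_dvd hℓ0 (by assumption) hℓh (by assumption) h''
      first
      | exact h₀₁ (d / e) (div_ne_zero hd0 he0) (by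
          rw [hdeq, heeq, smul_smul]; congr 1; field_simp)
      | exact h₀₂ (d / e) (div_ne_zero hd0 he0) (by
          rw [hdeq, heeq, smul_smul]; congr 1; field_simp)
      | exact h₀₃ (d / e) (div_ne_zero hd0 he0) (by
          rw [hdeq, heeq, smul_smul]; congr 1; field_simp)
      | exact h₀₄ (d / e) (div_ne_zero hd0 he0) (by
          rw [hdeq, heeq, smul_smul]; congr 1; field_simp) }
  -- degree contradiction if ℓ^3 divides one factor
  have hfinal : ∀ c : ℂ, c ≠ 0 → ℓ ^ 3 ∣ F c → False := by
    intro c hc hd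
    obtain ⟨q, hq⟩ := hd
    have hqne : q ≠ 0 := by
      rintro rfl
      rw [mul_zero] at hq
      exact hFne c hc hq
    have hFh : (F c).IsHomogeneous 2 := hah.sub (hbh.C_mul c)
    have hl3 : (ℓ ^ 3).totalDegree = 3 := by
      rw [(hℓh.pow 3).totalDegree (pow_ne_zero 3 hℓ0)]
    have : (F c).totalDegree = 3 + q.totalDegree := by
      rw [hq, my_td_mul (pow_ne_zero 3 hℓ0) hqne, hl3]
    rw [hFh.totalDegree (hFne c hc)] at this
    omega
  -- distinctness
  have hd1 : (1:ℂ) ≠ ρ := Ne.symm hρne1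
  have hd2 : (1:ℂ) ≠ ρ ^ 2 := Ne.symm hρ2ne1
  have hd3 : ρ ≠ ρ ^ 2 := by
    intro h
    have : ρ * (ρ - 1) = 0 := by linear_combination -h
    rcases mul_eq_zero.mp this with h' | h'
    · exact hρ0 h'
    · exact hρne1 (sub_eq_zero.mp h')
  rw [hfact] at hdvd
  have hℓdvd : ℓ ∣ F 1 * (F ρ * F (ρ ^ 2)) := dvd_trans (dvd_pow_self ℓ (by norm_num)) hdvd
  rcases hP.2.2 _ _ hℓdvd with h1 | h23
  · -- ℓ ∣ F 1 ; show ℓ does not divide the rest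
    have hnd : ¬ ℓ ∣ F ρ * F (ρ ^ 2) := by
      intro h
      rcases hP.2.2 _ _ h with h' | h'
      · exact honce 1 ρ hd1 h1 h'
      · exact honce 1 (ρ ^ 2) hd2 h1 h'
    exact hfinal 1 one_ne_zero (hP.pow_dvd_of_dvd_mul_right 3 hnd hdvd)
  · rcases hP.2.2 _ _ h23 with h1 | h1
    · have hprod : F 1 * (F ρ * F (ρ ^ 2)) = F ρ * (F 1 * F (ρ ^ 2)) := by ring
      rw [hprod] at hdvd
      have hnd : ¬ ℓ ∣ F 1 * F (ρ ^ 2) := by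
        intro h
        rcases hP.2.2 _ _ h with h' | h'
        · exact honce ρ 1 hd1.symm h1 h'
        · exact honce ρ (ρ ^ 2) hd3 h1 h'
      exact hfinal ρ hρ0 (hP.pow_dvd_of_dvd_mul_right 3 hnd hdvd)
    · have hprod : F 1 * (F ρ * F (ρ ^ 2)) = F (ρ ^ 2) * (F 1 * F ρ) := by ring
      rw [hprod] at hdvd
      have hnd : ¬ ℓ ∣ F 1 * F ρ := by
        intro h
        rcases hP.2.2 _ _ h with h' | h'
        · exact honce (ρ ^ 2) 1 hd2.symm h1 h'
        · exact honce (ρ ^ 2) ρ hd3.symm h1 h'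
      exact hfinal (ρ ^ 2) (pow_ne_zero 2 hρ0) (hP.pow_dvd_of_dvd_mul_right 3 hnd hdvd)
end
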